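/- Second-derivative bound: for f(r) = E[ψ(W; β₀, η₀ + r(η − η₀))] with ψ(W; β, η) = (Y − ℓ(S) − (X − m(S))ᵀβ)(X − m(S)), the second derivative in r equals 2E[(ℓ(S) − ℓ₀(S))(m(S) − m₀(S))] − 2E[(m(S) − m₀(S))(m(S) − m₀(S))ᵀ β₀], independent of r. -/

import Mathlib

open MeasureTheory

private lemma l2_mul_integrable {Ω : Type*} [MeasurableSpace Ω] {P : Measure Ω}
    {f g : Ω → ℝ} (hf : MemLp f 2 P) (hg : MemLp g 2 P) :
    Integrable (fun ω => f ω * g ω) P := by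
  have h : MemLp (f • g) 1 P := hg.smul hf (hpqr := ⟨by
    rw [inv_one, ENNReal.inv_two_add_inv_two]⟩)
  rw [memLp_one_iff_integrable] at h
  exact h

/-- Second-derivative computation: for
`f(r) = E[ψ(W; β₀, η₀ + r(η − η₀))]` with
`ψ(W; β, η) = (Y − ℓ(S) − (X − m(S))ᵀβ)(X − m(S))`, the second derivative in `r` equals
`2 E[(ℓ(S) − ℓ₀(S))(m(S) − m₀(S))] − 2 E[(m(S) − m₀(S))(m(S) − m₀(S))ᵀ β₀]`,
independent of `r ∈ (0,1)`. -/
theorem stmt_13 {Ω : Type*} [MeasurableSpace Ω] (P : Measure Ω) [IsProbabilityMeasure P]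
    (p d : ℕ) (Y : Ω → ℝ) (X : Ω → Fin p → ℝ) (S : Ω → Fin d → ℝ)
    (ℓ₀ ℓ : (Fin d → ℝ) → ℝ) (m₀ m : (Fin d → ℝ) → Fin p → ℝ) (β₀ : Fin p → ℝ)
    (hYL2 : MemLp Y 2 P) (hXL2 : ∀ j, MemLp (fun ω => X ω j) 2 P)
    (hℓL2 : MemLp (fun ω => ℓ (S ω)) 2 P) (hℓ₀L2 : MemLp (fun ω => ℓ₀ (S ω)) 2 P)
    (hmL2 : ∀ j, MemLp (fun ω => m (S ω) j) 2 P)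
    (hm₀L2 : ∀ j, MemLp (fun ω => m₀ (S ω) j) 2 P) :
    ∀ r ∈ Set.Ioo (0 : ℝ) 1,
      iteratedDeriv 2 (fun r : ℝ => (WithLp.toLp 2 (fun j => ∫ ω,
          (Y ω - (ℓ₀ (S ω) + r * (ℓ (S ω) - ℓ₀ (S ω)))
            - ∑ k, (X ω k - (m₀ (S ω) k + r * (m (S ω) k - m₀ (S ω) k))) * β₀ k)
          * (X ω j - (m₀ (S ω) j + r * (m (S ω) j - m₀ (S ω) j))) ∂P) :
          EuclideanSpace ℝ (Fin p))) r
        = (WithLp.toLp 2 (fun j =>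
            2 * ∫ ω, (ℓ (S ω) - ℓ₀ (S ω)) * (m (S ω) j - m₀ (S ω) j) ∂P
              - 2 * ∫ ω, (m (S ω) j - m₀ (S ω) j)
                  * (∑ k, (m (S ω) k - m₀ (S ω) k) * β₀ k) ∂P) :
            EuclideanSpace ℝ (Fin p)) := by
  intro r hr
  -- the scalar building blocks
  set A : Ω → ℝ := fun ω => Y ω - ℓ₀ (S ω) - ∑ k, (X ω k - m₀ (S ω) k) * β₀ k with hA
  set B : Ω → ℝ := fun ω => (ℓ (S ω) - ℓ₀ (S ω)) - ∑ k, (m (S ω) k - m₀ (S ω) k) * β₀ k with hB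
  set C : Fin p → Ω → ℝ := fun j ω => X ω j - m₀ (S ω) j with hC
  set D : Fin p → Ω → ℝ := fun j ω => m (S ω) j - m₀ (S ω) j with hD
  -- L² facts
  have hAL2 : MemLp A 2 P := by
    apply (hYL2.sub hℓ₀L2).sub
    exact memLp_finset_sum _ (fun k _ => by
      simpa [mul_comm] using ((hXL2 k).sub (hm₀L2 k)).const_mul (β₀ k))
  have hBL2 : MemLp B 2 P := by
    apply (hℓL2.sub hℓ₀L2).sub
    exact memLp_finset_sum _ (fun k _ => by
      simpa [mul_comm] using ((hmL2 k).sub (hm₀L2 k)).const_mul (β₀ k))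
  have hCL2 : ∀ j, MemLp (C j) 2 P := fun j => (hXL2 j).sub (hm₀L2 j)
  have hDL2 : ∀ j, MemLp (D j) 2 P := fun j => (hmL2 j).sub (hm₀L2 j)
  have hAC : ∀ j, Integrable (fun ω => A ω * C j ω) P :=
    fun j => l2_mul_integrable hAL2 (hCL2 j)
  have hBC : ∀ j, Integrable (fun ω => B ω * C j ω) P :=
    fun j => l2_mul_integrable hBL2 (hCL2 j)
  have hAD : ∀ j, Integrable (fun ω => A ω * D j ω) P :=
    fun j => l2_mul_integrable hAL2 (hDL2 j)
  have hBD : ∀ j, Integrable (fun ω => B ω * D j ω) P :=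
    fun j => l2_mul_integrable hBL2 (hDL2 j)
  -- the three coefficient vectors
  set V0 : Fin p → ℝ := fun j => ∫ ω, A ω * C j ω ∂P with hV0
  set V1 : Fin p → ℝ :=
    fun j => ∫ ω, (B ω * C j ω + A ω * D j ω) ∂P with hV1
  set V2 : Fin p → ℝ := fun j => ∫ ω, B ω * D j ω ∂P with hV2
  -- the function is a quadratic polynomial in r
  have key : (fun r : ℝ => (WithLp.toLp 2 (fun j => ∫ ω,
          (Y ω - (ℓ₀ (S ω) + r * (ℓ (S ω) - ℓ₀ (S ω)))
            - ∑ k, (X ω k - (m₀ (S ω) k + r * (m (S ω) k - m₀ (S ω) k))) * β₀ k)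
          * (X ω j - (m₀ (S ω) j + r * (m (S ω) j - m₀ (S ω) j))) ∂P) :
          EuclideanSpace ℝ (Fin p)))
      = fun r : ℝ => (WithLp.toLp 2 V0 : EuclideanSpace ℝ (Fin p)) - r • WithLp.toLp 2 V1
          + r ^ 2 • WithLp.toLp 2 V2 := by
    funext r
    ext j
    show (∫ ω, _ ∂P) = V0 j - r * V1 j + r ^ 2 * V2 j
    have hptw : ∀ ω,
        (Y ω - (ℓ₀ (S ω) + r * (ℓ (S ω) - ℓ₀ (S ω)))
            - ∑ k, (X ω k - (m₀ (S ω) k + r * (m (S ω) k - m₀ (S ω) k))) * β₀ k)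
          * (X ω j - (m₀ (S ω) j + r * (m (S ω) j - m₀ (S ω) j)))
        = A ω * C j ω - r * (B ω * C j ω + A ω * D j ω) + r ^ 2 * (B ω * D j ω) := by
      intro ω
      have hsum : ∑ k, (X ω k - (m₀ (S ω) k + r * (m (S ω) k - m₀ (S ω) k))) * β₀ k
          = (∑ k, (X ω k - m₀ (S ω) k) * β₀ k)
            - r * ∑ k, (m (S ω) k - m₀ (S ω) k) * β₀ k := by
        rw [Finset.mul_sum, ← Finset.sum_sub_distrib]
        exact Finset.sum_congr rfl fun k _ => by ring
      rw [hsum]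
      simp only [hA, hB, hC, hD]
      ring
    calc (∫ ω, (Y ω - (ℓ₀ (S ω) + r * (ℓ (S ω) - ℓ₀ (S ω)))
            - ∑ k, (X ω k - (m₀ (S ω) k + r * (m (S ω) k - m₀ (S ω) k))) * β₀ k)
          * (X ω j - (m₀ (S ω) j + r * (m (S ω) j - m₀ (S ω) j))) ∂P)
        = ∫ ω, (A ω * C j ω - r * (B ω * C j ω + A ω * D j ω)
            + r ^ 2 * (B ω * D j ω)) ∂P := by
          exact integral_congr_ae (Filter.Eventually.of_forall hptw)
      _ = V0 j - r * V1 j + r ^ 2 * V2 j := by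
          have hI1 : Integrable (fun ω => r * (B ω * C j ω + A ω * D j ω)) P :=
            (((hBC j).add (hAD j)).const_mul r)
          have hI2 : Integrable (fun ω => r ^ 2 * (B ω * D j ω)) P :=
            ((hBD j).const_mul (r ^ 2))
          have hI3 : Integrable
              (fun ω => A ω * C j ω - r * (B ω * C j ω + A ω * D j ω)) P :=
            (hAC j).sub hI1
          rw [integral_add hI3 hI2, integral_sub (hAC j) hI1, integral_const_mul,
            integral_const_mul]
  rw [key, iteratedDeriv_succ, iteratedDeriv_one]
  -- first derivative
  set W0 : EuclideanSpace ℝ (Fin p) := WithLp.toLp 2 V0 with hW0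
  set W1 : EuclideanSpace ℝ (Fin p) := WithLp.toLp 2 V1 with hW1
  set W2 : EuclideanSpace ℝ (Fin p) := WithLp.toLp 2 V2 with hW2
  have hd1 : deriv (fun r : ℝ => W0 - r • W1 + r ^ 2 • W2)
      = fun r : ℝ => -W1 + (2 * r ^ 1) • W2 := by
    funext s
    have h : HasDerivAt (fun r : ℝ => W0 - r • W1 + r ^ 2 • W2)
        ((0 : EuclideanSpace ℝ (Fin p)) - (1 : ℝ) • W1 + (2 * s ^ 1) • W2) s := by
      exact ((hasDerivAt_const s W0).sub ((hasDerivAt_id s).smul_const W1)).add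
        ((hasDerivAt_pow 2 s).smul_const W2)
    simpa using h.deriv
  have step1 : deriv (deriv fun r : ℝ => W0 - r • W1 + r ^ 2 • W2) r
      = deriv (fun r : ℝ => -W1 + (2 * r ^ 1) • W2) r :=
    congrArg (fun h : ℝ → EuclideanSpace ℝ (Fin p) => deriv h r) hd1
  refine step1.trans ?_
  -- second derivative
  have hd2 : HasDerivAt (fun s : ℝ => -W1 + (2 * s ^ 1) • W2)
      ((0 : EuclideanSpace ℝ (Fin p)) + ((2 : ℝ) * 1) • W2) r := by
    have : HasDerivAt (fun s : ℝ => 2 * s ^ 1) ((2 : ℝ) * 1) r := by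
      simpa using ((hasDerivAt_id r).const_mul (2 : ℝ))
    exact (hasDerivAt_const r (-W1)).add (this.smul_const W2)
  rw [hd2.deriv]
  ext j
  simp only [PiLp.add_apply, PiLp.zero_apply, PiLp.smul_apply, smul_eq_mul, zero_add, mul_one, hW2]
  have hptw2 : ∀ ω, B ω * D j ω
      = (ℓ (S ω) - ℓ₀ (S ω)) * (m (S ω) j - m₀ (S ω) j)
        - (m (S ω) j - m₀ (S ω) j) * (∑ k, (m (S ω) k - m₀ (S ω) k) * β₀ k) := by
    intro ω; simp only [hB, hD]; ring
  have hsumL2 : MemLp (fun ω => ∑ k, (m (S ω) k - m₀ (S ω) k) * β₀ k) 2 P := by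
    exact memLp_finset_sum _ (fun k _ => by
      simpa [mul_comm] using ((hmL2 k).sub (hm₀L2 k)).const_mul (β₀ k))
  have h1 : Integrable (fun ω => (ℓ (S ω) - ℓ₀ (S ω)) * (m (S ω) j - m₀ (S ω) j)) P :=
    l2_mul_integrable (hℓL2.sub hℓ₀L2) (hDL2 j)
  have h2 : Integrable (fun ω =>
      (m (S ω) j - m₀ (S ω) j) * (∑ k, (m (S ω) k - m₀ (S ω) k) * β₀ k)) P :=
    l2_mul_integrable (hDL2 j) hsumL2
  have : V2 j = (∫ ω, (ℓ (S ω) - ℓ₀ (S ω)) * (m (S ω) j - m₀ (S ω) j) ∂P)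
      - ∫ ω, (m (S ω) j - m₀ (S ω) j) * (∑ k, (m (S ω) k - m₀ (S ω) k) * β₀ k) ∂P := by
    show (∫ ω, B ω * D j ω ∂P) = _
    rw [integral_congr_ae (Filter.Eventually.of_forall hptw2)]
    exact integral_sub h1 h2
  rw [this]
  ring
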